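/- arXiv:1209.3680 — 4 statements merged into one kernel-verified Lean document; each statement's English description precedes it below -/
import Mathlib

section
/- Let X be a (2,D)-smooth separable Banach space, i.e. for every martingale difference sequence (d_1,...,d_N) with values in X, E(|d_1+...+d_N|^2) ≤ D^2 Σ_{n=1}^N E(|d_n|^2). Let (d_n) be a stationary sequence of martingale differences in L^2(Ω,X) (d_n = d∘θ^n with θ measure-preserving, d F_1-measurable, E(d|F_0)=0). Then for every S ≥ 1, P( sup_{1≤s≤S} max_{1≤k≤2^s} |S_k(d)|/(2^{s/2} (max(1,log s))^{1/2}) > λ ) ≤ C D^2 ||d||_2^2 S / (λ^2 max(1,log S)) for a universal constant C, where S_k(d)=d_0+...+d_{k-1}. -/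
open MeasureTheory Filter Real

/-- `L(x) = max(1, log x)`. -/
noncomputable def llog (x : ℝ) : ℝ := max 1 (Real.log x)

/-- Partial (Birkhoff) sums `S_n(d) = ∑_{i<n} d ∘ θ^i`. -/
noncomputable def birkhoff {Ω X : Type*} [AddCommMonoid X] (θ : Ω → Ω) (d : Ω → X)
    (n : ℕ) (ω : Ω) : X :=
  ∑ i ∈ Finset.range n, d (θ^[i] ω)

/-- A Banach space `X` is `(r,D)`-smooth: for every martingale difference sequence
`(d_n)` with values in `X`, `E‖d_0+⋯+d_{N-1}‖^r ≤ D^r ∑ E‖d_n‖^r`. -/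
def SmoothBanach (X : Type) [NormedAddCommGroup X] [NormedSpace ℝ X] [CompleteSpace X]
    (r D : ℝ) : Prop :=
  ∀ (Ω : Type) [m : MeasurableSpace Ω] (μ : Measure Ω), IsProbabilityMeasure μ →
    ∀ (ℱ : ℕ → MeasurableSpace Ω), (∀ n, ℱ n ≤ m) → Monotone ℱ →
      ∀ (N : ℕ) (d : ℕ → Ω → X),
        (∀ n, MemLp (d n) (ENNReal.ofReal r) μ) →
        (∀ n, StronglyMeasurable[ℱ (n + 1)] (d n)) →
        (∀ n, μ[d n | ℱ n] =ᵐ[μ] 0) →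
        ∫ ω, ‖∑ n ∈ Finset.range N, d n ω‖ ^ r ∂μ ≤
          D ^ r * ∑ n ∈ Finset.range N, ∫ ω, ‖d n ω‖ ^ r ∂μ

lemma llog_ge_one (x : ℝ) : 1 ≤ llog x := le_max_left _ _
lemma llog_pos (x : ℝ) : 0 < llog x := lt_of_lt_of_le one_pos (llog_ge_one x)

lemma llog_le_two_sqrt {x : ℝ} (hx : 1 ≤ x) : llog x ≤ 2 * Real.sqrt x := by
  have hs : 1 ≤ Real.sqrt x := by
    rw [show (1:ℝ) = Real.sqrt 1 by simp]; exact Real.sqrt_le_sqrt hx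
  have hlog : Real.log x ≤ 2 * Real.sqrt x := by
    have h1 : Real.log (Real.sqrt x) ≤ Real.sqrt x - 1 :=
      Real.log_le_sub_one_of_pos (by linarith)
    have h2 : Real.log x = 2 * Real.log (Real.sqrt x) := by
      rw [Real.log_sqrt (by linarith : (0:ℝ) ≤ x)]; ring
    linarith
  rw [llog, max_le_iff]; constructor <;> linarith

lemma sum_inv_llog {S : ℕ} (hS : 1 ≤ S) :
    ∑ s ∈ Finset.Icc 1 S, 1 / llog s ≤ 4 * S / llog S := by
  have hS1 : (1:ℝ) ≤ (S:ℝ) := by exact_mod_cast hS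
  have hLS := llog_pos (S:ℝ)
  classical
  rw [← Finset.sum_filter_add_sum_filter_not (Finset.Icc 1 S) (fun s => s*s ≤ S)]
  have hsmall : ∑ s ∈ (Finset.Icc 1 S).filter (fun s => s*s ≤ S), 1 / llog s
      ≤ 2 * S / llog S := by
    have h1 : ∑ s ∈ (Finset.Icc 1 S).filter (fun s => s*s ≤ S), 1 / llog s
        ≤ ∑ _s ∈ (Finset.Icc 1 S).filter (fun s => s*s ≤ S), (1:ℝ) := by
      refine Finset.sum_le_sum fun s _ => ?_
      rw [div_le_one (llog_pos _)]; exact llog_ge_one _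
    have hcard : ((Finset.Icc 1 S).filter (fun s => s*s ≤ S)).card ≤ Nat.sqrt S := by
      have hsub : (Finset.Icc 1 S).filter (fun s => s*s ≤ S) ⊆ Finset.Icc 1 (Nat.sqrt S) := by
        intro s hs
        simp only [Finset.mem_filter, Finset.mem_Icc] at hs ⊢
        exact ⟨hs.1.1, Nat.le_sqrt.mpr hs.2⟩
      simpa using Finset.card_le_card hsub
    have h2 : ((Nat.sqrt S : ℝ)) ≤ Real.sqrt S := by
      rw [show ((Nat.sqrt S : ℝ)) = Real.sqrt ((Nat.sqrt S)^2 : ℝ) by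
        rw [Real.sqrt_sq (by positivity)]]
      apply Real.sqrt_le_sqrt
      exact_mod_cast Nat.sqrt_le' S
    have h3 : Real.sqrt S * llog S ≤ 2 * S := by
      have := llog_le_two_sqrt hS1
      have hmul := mul_le_mul_of_nonneg_left this (Real.sqrt_nonneg (S:ℝ))
      have hsq : Real.sqrt S * Real.sqrt S = (S:ℝ) := Real.mul_self_sqrt (by positivity)
      nlinarith
    calc ∑ s ∈ (Finset.Icc 1 S).filter (fun s => s*s ≤ S), 1 / llog s
        ≤ ((Finset.Icc 1 S).filter (fun s => s*s ≤ S)).card := by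
          simpa using h1
      _ ≤ (Nat.sqrt S : ℝ) := by exact_mod_cast hcard
      _ ≤ Real.sqrt S := h2
      _ ≤ 2 * S / llog S := by
          rw [le_div_iff₀ hLS]; linarith
  have hbig : ∑ s ∈ (Finset.Icc 1 S).filter (fun s => ¬ s*s ≤ S), 1 / llog s
      ≤ 2 * S / llog S := by
    have h1 : ∀ s ∈ (Finset.Icc 1 S).filter (fun s => ¬ s*s ≤ S),
        1 / llog s ≤ 2 / llog S := by
      intro s hs
      simp only [Finset.mem_filter, Finset.mem_Icc, not_le] at hs
      have hs1 : 1 ≤ s := hs.1.1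
      have hs1' : (1:ℝ) ≤ (s:ℝ) := by exact_mod_cast hs1
      have hSs : (S:ℝ) ≤ (s:ℝ) * (s:ℝ) := by exact_mod_cast hs.2.le
      have hlogs : 0 ≤ Real.log s := Real.log_nonneg hs1'
      have hkey : llog S ≤ 2 * llog s := by
        rw [llog, max_le_iff]
        constructor
        · linarith [llog_ge_one (s:ℝ)]
        · have : Real.log S ≤ Real.log ((s:ℝ)*(s:ℝ)) :=
            Real.log_le_log (by linarith) hSs
          rw [Real.log_mul (by linarith) (by linarith)] at this
          have : Real.log S ≤ 2 * Real.log s := by linarith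
          have h4 : Real.log s ≤ llog s := le_max_right _ _
          linarith
      rw [div_le_div_iff₀ (llog_pos _) hLS]
      linarith [mul_le_mul_of_nonneg_left hkey (le_of_lt (llog_pos (s:ℝ))),
        llog_pos (s:ℝ)]
    calc ∑ s ∈ (Finset.Icc 1 S).filter (fun s => ¬ s*s ≤ S), 1 / llog s
        ≤ ∑ _s ∈ (Finset.Icc 1 S).filter (fun s => ¬ s*s ≤ S), 2 / llog S :=
          Finset.sum_le_sum h1
      _ = ((Finset.Icc 1 S).filter (fun s => ¬ s*s ≤ S)).card * (2 / llog S) := by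
          simp [mul_comm]
      _ ≤ (S:ℝ) * (2 / llog S) := by
          have : ((Finset.Icc 1 S).filter (fun s => ¬ s*s ≤ S)).card ≤ S := by
            refine le_trans (Finset.card_le_card (Finset.filter_subset _ _)) (by simp)
          have h2 : (0:ℝ) ≤ 2 / llog S := by positivity
          exact mul_le_mul_of_nonneg_right (by exact_mod_cast this) h2
      _ = 2 * S / llog S := by ring
  have hring : 2 * (S:ℝ) / llog S + 2 * S / llog S = 4 * S / llog S := by ring
  linarith

lemma exists_norming (X : Type*) [NormedAddCommGroup X] [NormedSpace ℝ X]
    [TopologicalSpace.SeparableSpace X] :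
    ∃ φ : ℕ → X →L[ℝ] ℝ, (∀ n, ‖φ n‖ ≤ 1) ∧
      ∀ (x : X) (r : ℝ), (∀ n, φ n x ≤ r) → ‖x‖ ≤ r := by
  have : Nonempty X := ⟨0⟩
  have hu : DenseRange (TopologicalSpace.denseSeq X) :=
    TopologicalSpace.denseRange_denseSeq X
  set u := TopologicalSpace.denseSeq X with hudef
  choose φ hφ1 hφ2 using fun n => exists_dual_vector'' ℝ (u n)
  refine ⟨φ, hφ1, fun x r h => ?_⟩
  refine le_of_forall_pos_le_add fun ε hε => ?_
  obtain ⟨n, hn⟩ := hu.exists_dist_lt x (half_pos hε)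
  rw [dist_eq_norm] at hn
  have hφ2' : ∀ k, φ k (u k) = ‖u k‖ := fun k => by simpa using hφ2 k
  have h3 : |(φ n) (x - u n)| ≤ ‖x - u n‖ := by
    have h2 := (φ n).le_opNorm (x - u n)
    rw [Real.norm_eq_abs] at h2
    nlinarith [hφ1 n, norm_nonneg (x - u n)]
  have h4 : (φ n) x = ‖u n‖ + (φ n) (x - u n) := by
    rw [← hφ2' n, ← map_add]; congr 1; abel
  have h5 : ‖x‖ - ‖u n‖ ≤ ‖x - u n‖ := norm_sub_norm_le x (u n)
  have h6 := neg_le_of_abs_le h3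
  linarith [h n]

lemma condexp_clm_comm {Ω : Type*} {X : Type*} [NormedAddCommGroup X] [NormedSpace ℝ X]
    [CompleteSpace X] {m m0 : MeasurableSpace Ω} (hm : m ≤ m0) {μ : Measure Ω}
    [IsFiniteMeasure μ] (φ : X →L[ℝ] ℝ) {f : Ω → X} (hf : Integrable f μ) :
    (fun ω => φ ((μ[f|m]) ω)) =ᵐ[μ] μ[fun ω => φ (f ω)|m] := by
  refine ae_eq_condExp_of_forall_setIntegral_eq hm (φ.integrable_comp hf)
    (fun s _ _ => (φ.integrable_comp integrable_condExp).integrableOn)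
    (fun s hs _ => ?_) ?_
  · calc ∫ x in s, φ ((μ[f|m]) x) ∂μ = φ (∫ x in s, (μ[f|m]) x ∂μ) :=
          φ.integral_comp_comm integrable_condExp.integrableOn
    _ = φ (∫ x in s, f x ∂μ) := by rw [setIntegral_condExp hm hf hs]
    _ = ∫ x in s, φ (f x) ∂μ := (φ.integral_comp_comm hf.integrableOn).symm
  · exact (φ.continuous.comp_stronglyMeasurable
      stronglyMeasurable_condExp).aestronglyMeasurable

lemma norm_condexp_le_condexp_norm' {Ω : Type*} {X : Type*} [NormedAddCommGroup X]
    [NormedSpace ℝ X] [CompleteSpace X] [TopologicalSpace.SeparableSpace X]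
    {m m0 : MeasurableSpace Ω} (hm : m ≤ m0) {μ : Measure Ω}
    [IsFiniteMeasure μ] {f : Ω → X} (hf : Integrable f μ) :
    (fun ω => ‖(μ[f|m]) ω‖) ≤ᵐ[μ] μ[fun ω => ‖f ω‖|m] := by
  obtain ⟨φ, hφ1, hφ2⟩ := exists_norming X
  have h1 : ∀ n, (fun ω => φ n ((μ[f|m]) ω)) ≤ᵐ[μ] μ[fun ω => ‖f ω‖|m] := by
    intro n
    refine (condexp_clm_comm hm (φ n) hf).le.trans
      (condExp_mono ((φ n).integrable_comp hf) hf.norm (ae_of_all _ fun ω => ?_))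
    have h2 := (φ n).le_opNorm (f ω)
    rw [Real.norm_eq_abs] at h2
    nlinarith [hφ1 n, norm_nonneg (f ω), le_abs_self ((φ n) (f ω))]
  have h3 : ∀ᵐ ω ∂μ, ∀ n, φ n ((μ[f|m]) ω) ≤ (μ[fun ω => ‖f ω‖|m]) ω :=
    (ae_all_iff).mpr fun n => h1 n
  filter_upwards [h3] with ω hω
  exact hφ2 _ _ hω

lemma doob_chebyshev {Ω : Type*} {m0 : MeasurableSpace Ω} {μ : Measure Ω}
    [IsProbabilityMeasure μ] {𝒢 : Filtration ℕ m0} {g : ℕ → Ω → ℝ}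
    (hsub : Submartingale g 𝒢 μ) (hnonneg : 0 ≤ g) {N : ℕ}
    (hg2 : Integrable (fun ω => (g N ω)^2) μ) {ε : ℝ} (hε : 0 < ε) :
    (μ {ω | ∃ k ∈ Finset.range (N+1), ε ≤ g k ω}).toReal ≤ (∫ ω, (g N ω)^2 ∂μ) / ε^2 := by
  set A := {ω | ∃ k ∈ Finset.range (N+1), ε ≤ g k ω} with hAdef
  have hAeq : A = {ω | (ε.toNNReal : ℝ) ≤
      (Finset.range (N + 1)).sup' Finset.nonempty_range_add_one fun k => g k ω} := by
    ext ω
    simp only [hAdef, Set.mem_setOf_eq, Finset.le_sup'_iff, Real.coe_toNNReal _ hε.le]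
  have hmax := maximal_ineq hsub hnonneg (ε := ε.toNNReal) N
  rw [← hAeq] at hmax
  have hAmeas : MeasurableSet A := by
    have : A = ⋃ k ∈ Finset.range (N+1), {ω | ε ≤ g k ω} := by
      ext ω; simp [hAdef]
    rw [this]
    refine Finset.measurableSet_biUnion _ fun k _ => ?_
    exact measurableSet_le measurable_const ((hsub.stronglyMeasurable k).mono (𝒢.le k)).measurable
  have hAfin : μ A ≠ ⊤ := measure_ne_top _ _
  have hμA : (0:ℝ) ≤ (μ A).toReal := ENNReal.toReal_nonneg
  -- convert maximal_ineq to real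
  have hIntN : Integrable (g N) μ := hsub.integrable N
  have hsetint_nonneg : 0 ≤ ∫ ω in A, g N ω ∂μ :=
    setIntegral_nonneg hAmeas fun ω _ => hnonneg N ω
  have hreal : ε * (μ A).toReal ≤ ∫ ω in A, g N ω ∂μ := by
    have := ENNReal.toReal_mono (by simp [ENNReal.ofReal_ne_top]) hmax
    rwa [ENNReal.toReal_mul, ENNReal.toReal_ofReal hsetint_nonneg,
      ENNReal.coe_toReal, Real.coe_toNNReal _ hε.le] at this
  -- AM-GM bound
  have hptwise : ∀ ω ∈ A, g N ω ≤ ε/2 + (g N ω)^2/(2*ε) := by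
    intro ω _
    have h0 := hnonneg N ω
    have : 0 ≤ (g N ω - ε)^2 := sq_nonneg _
    rw [div_add_div _ _ (by norm_num) (by positivity), le_div_iff₀ (by positivity)]
    nlinarith
  have hint2 : ∫ ω in A, g N ω ∂μ ≤ ε/2 * (μ A).toReal + (∫ ω, (g N ω)^2 ∂μ)/(2*ε) := by
    have h1 : ∫ ω in A, g N ω ∂μ ≤ ∫ ω in A, (ε/2 + (g N ω)^2/(2*ε)) ∂μ := by
      refine setIntegral_mono_on hIntN.integrableOn ?_ hAmeas hptwise
      exact (integrable_const _).add (hg2.div_const _) |>.integrableOn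
    have h2 : ∫ ω in A, (ε/2 + (g N ω)^2/(2*ε)) ∂μ
        = ε/2 * (μ A).toReal + ∫ ω in A, (g N ω)^2/(2*ε) ∂μ := by
      rw [integral_add (integrable_const _).integrableOn (hg2.div_const _).integrableOn,
        setIntegral_const, smul_eq_mul, mul_comm, measureReal_def]
    have h3 : ∫ ω in A, (g N ω)^2/(2*ε) ∂μ ≤ (∫ ω, (g N ω)^2 ∂μ)/(2*ε) := by
      rw [integral_div]
      gcongr
      exact ae_of_all _ fun ω => sq_nonneg _
      exact Measure.restrict_le_self
    linarith
  have hE_nonneg : 0 ≤ ∫ ω, (g N ω)^2 ∂μ := integral_nonneg fun ω => sq_nonneg _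
  rw [le_div_iff₀ (by positivity)]
  have hcomb : ε/2 * (μ A).toReal ≤ (∫ ω, (g N ω)^2 ∂μ)/(2*ε) := by
    linarith [hreal.trans hint2]
  have hfin := (le_div_iff₀ (by positivity : (0:ℝ) < 2*ε)).mp hcomb
  nlinarith [hfin]

theorem helper {X : Type} [NormedAddCommGroup X] [NormedSpace ℝ X] [CompleteSpace X]
    [TopologicalSpace.SeparableSpace X] {Ω : Type} (F0 : MeasurableSpace Ω)
    [m : MeasurableSpace Ω] (μ : Measure Ω) [hprob : IsProbabilityMeasure μ]
    (D : ℝ) (hD : 1 ≤ D) (hsmooth : SmoothBanach X 2 D)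
    (θ : Ω → Ω) (hθ : MeasurePreserving θ μ μ)
    (hF0m : F0 ≤ m) (hF0θ : F0 ≤ MeasurableSpace.comap θ F0)
    (hθF0m : MeasurableSpace.comap θ F0 ≤ m)
    (d : Ω → X) (hd2 : MemLp d 2 μ)
    (hdsm : StronglyMeasurable[MeasurableSpace.comap θ F0] d)
    (hd0 : μ[d | F0] =ᵐ[μ] 0)
    (S : ℕ) (hS : 1 ≤ S) (lam : ℝ) (hlam : 0 < lam) :
    (μ {ω | ∃ s ∈ Finset.Icc 1 S, ∃ k ∈ Finset.Icc 1 (2 ^ s),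
        lam < ‖birkhoff θ d k ω‖ /
          ((2 : ℝ) ^ ((s : ℝ) / 2) * Real.sqrt (llog (s : ℝ)))}).toReal ≤
      4 * D ^ 2 * (∫ ω, ‖d ω‖ ^ 2 ∂μ) * (S : ℝ) / (lam ^ 2 * llog (S : ℝ)) := by
  have hdint : Integrable d μ := hd2.integrable (by norm_num)
  have hθn : ∀ n : ℕ, Measurable (θ^[n]) := fun n => hθ.measurable.iterate n
  set 𝒢seq : ℕ → MeasurableSpace Ω := fun n => MeasurableSpace.comap θ^[n] F0 with h𝒢def
  have h𝒢le : ∀ n, 𝒢seq n ≤ m := fun n =>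
    (MeasurableSpace.comap_mono hF0m).trans ((measurable_iff_comap_le).mp (hθn n))
  have h𝒢succ : ∀ n, MeasurableSpace.comap (θ^[n]) (MeasurableSpace.comap θ F0)
      = 𝒢seq (n+1) := by
    intro n
    show MeasurableSpace.comap (θ^[n]) (MeasurableSpace.comap θ F0)
      = MeasurableSpace.comap (θ^[n+1]) F0
    rw [Function.iterate_succ', MeasurableSpace.comap_comp]
  have h𝒢mono : Monotone 𝒢seq := monotone_nat_of_le_succ (fun n => by
    rw [← h𝒢succ n]; exact MeasurableSpace.comap_mono hF0θ)
  set 𝒢 : Filtration ℕ m := ⟨𝒢seq, h𝒢mono, h𝒢le⟩ with h𝒢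
  set ds : ℕ → Ω → X := fun n ω => d (θ^[n] ω) with hds
  have hds_sm : ∀ n, StronglyMeasurable[𝒢seq (n+1)] (ds n) := fun n => by
    rw [← h𝒢succ n]
    exact hdsm.comp_measurable ((measurable_iff_comap_le).mpr le_rfl)
  have hds_mem : ∀ n, MemLp (ds n) 2 μ := fun n => hd2.comp_measurePreserving (hθ.iterate n)
  have hds_int : ∀ n, Integrable (ds n) μ := fun n => (hds_mem n).integrable (by norm_num)
  have hds_cond : ∀ n, μ[ds n | 𝒢seq n] =ᵐ[μ] 0 := by
    intro n
    refine (ae_eq_condExp_of_forall_setIntegral_eq (h𝒢le n) (hds_int n)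
      (fun s _ _ => (integrable_zero _ _ _).integrableOn) (fun s hs _ => ?_) ?_).symm
    · obtain ⟨t, ht, hts⟩ := hs
      have htm : MeasurableSet t := hF0m t ht
      have hmap : Measure.map (θ^[n]) (μ.restrict (θ^[n] ⁻¹' t)) = μ.restrict t :=
        ((hθ.iterate n).restrict_preimage htm).map_eq
      have hAESM : AEStronglyMeasurable d (Measure.map (θ^[n]) (μ.restrict (θ^[n] ⁻¹' t))) := by
        rw [hmap]; exact ((hdsm.mono hθF0m).aestronglyMeasurable).restrict
      have h1 : ∫ x in s, ds n x ∂μ = ∫ y in t, d y ∂μ := by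
        rw [← hts, ← hmap, integral_map (hθn n).aemeasurable hAESM]
      have h2 : ∫ y in t, d y ∂μ = 0 := by
        rw [← setIntegral_condExp hF0m hdint ht,
          integral_congr_ae (ae_restrict_of_ae hd0)]
        simp
      simp [h1, h2]
    · exact stronglyMeasurable_zero.aestronglyMeasurable
  set f : ℕ → Ω → X := fun k => birkhoff θ d k with hfdef
  have hf_eq : ∀ k, f k = ∑ i ∈ Finset.range k, ds i := fun k => by
    funext ω
    simp [hfdef, birkhoff, hds, Finset.sum_apply]
  have hf_sm : ∀ k, StronglyMeasurable[𝒢seq k] (f k) := by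
    intro k
    rw [hf_eq]
    exact Finset.stronglyMeasurable_sum _ (fun i hi =>
      (hds_sm i).mono (h𝒢mono (Nat.succ_le_of_lt (Finset.mem_range.mp hi))))
  have hf_int : ∀ k, Integrable (f k) μ := fun k => by
    rw [hf_eq]; exact integrable_finset_sum' _ (fun i _ => hds_int i)
  have hf_mem2 : ∀ k, MemLp (f k) 2 μ := fun k => by
    rw [hf_eq]; exact memLp_finset_sum' _ (fun i _ => hds_mem i)
  have hkey : ∀ n, μ[f (n+1) | 𝒢seq n] =ᵐ[μ] f n := by
    intro n
    have hsplit : f (n+1) = f n + ds n := by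
      funext ω
      simp [hf_eq, Finset.sum_range_succ, Pi.add_apply]
    rw [hsplit]
    refine (condExp_add (hf_int n) (hds_int n) _).trans ?_
    have h1 : μ[f n|𝒢seq n] = f n :=
      condExp_of_stronglyMeasurable (h𝒢le n) (hf_sm n) (hf_int n)
    rw [h1]
    filter_upwards [hds_cond n] with ω hω
    simp [hω]
  set g : ℕ → Ω → ℝ := fun k ω => ‖f k ω‖ with hgdef
  have hgsub : Submartingale g 𝒢 μ := by
    refine submartingale_nat (fun k => (hf_sm k).norm) (fun k => (hf_int k).norm)
      (fun i => ?_)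
    have hj := norm_condexp_le_condexp_norm' (h𝒢le i) (hf_int (i+1))
    filter_upwards [hkey i, hj] with ω h1 h2
    calc g i ω = ‖(μ[f (i+1)|𝒢seq i]) ω‖ := by rw [hgdef]; simp only [h1]
    _ ≤ (μ[fun ω => ‖f (i+1) ω‖|𝒢seq i]) ω := h2
  have hEd : (0:ℝ) ≤ ∫ ω, ‖d ω‖^2 ∂μ := integral_nonneg fun ω => by positivity
  have hvar : ∀ N : ℕ, ∫ ω, (g N ω)^2 ∂μ ≤ D^2 * N * ∫ ω, ‖d ω‖^2 ∂μ := by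
    intro N
    have hmem' : ∀ n, MemLp (ds n) (ENNReal.ofReal 2) μ := fun n => by
      simpa [ENNReal.ofReal_ofNat] using hds_mem n
    have hs := hsmooth Ω μ hprob 𝒢seq h𝒢le h𝒢mono N ds hmem' hds_sm hds_cond
    simp only [show ((2:ℝ)) = ((2:ℕ):ℝ) by norm_num, Real.rpow_natCast] at hs
    have hdsint2 : ∀ n, ∫ ω, ‖ds n ω‖^(2:ℕ) ∂μ = ∫ ω, ‖d ω‖^(2:ℕ) ∂μ := by
      intro n
      have hAESM2 : AEStronglyMeasurable (fun ω => ‖d ω‖^(2:ℕ)) (Measure.map (θ^[n]) μ) := by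
        rw [(hθ.iterate n).map_eq]
        exact ((hdsm.mono hθF0m).norm.pow 2).aestronglyMeasurable
      conv_rhs => rw [← (hθ.iterate n).map_eq]
      rw [integral_map (hθn n).aemeasurable hAESM2]
    calc ∫ ω, (g N ω)^2 ∂μ = ∫ ω, ‖∑ n ∈ Finset.range N, ds n ω‖^(2:ℕ) ∂μ := rfl
      _ ≤ D^(2:ℕ) * ∑ n ∈ Finset.range N, ∫ ω, ‖ds n ω‖^(2:ℕ) ∂μ := hs
      _ = D^2 * N * ∫ ω, ‖d ω‖^2 ∂μ := by
          rw [Finset.sum_congr rfl (fun n _ => hdsint2 n)]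
          simp [Finset.sum_const, Finset.card_range]
          ring
  set E := ∫ ω, ‖d ω‖^2 ∂μ with hEdef
  set A : ℕ → Set Ω := fun s => {ω | ∃ k ∈ Finset.range (2^s + 1),
    lam * ((2:ℝ)^((s:ℝ)/2) * Real.sqrt (llog s)) ≤ g k ω} with hAdef
  have hcs_pos : ∀ s : ℕ, (0:ℝ) < (2:ℝ)^((s:ℝ)/2) * Real.sqrt (llog s) := fun s =>
    mul_pos (Real.rpow_pos_of_pos two_pos _) (Real.sqrt_pos.mpr (llog_pos _))
  have hAs : ∀ s ∈ Finset.Icc 1 S,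
      (μ (A s)).toReal ≤ D^2 * E / lam^2 * (1 / llog s) := by
    intro s _
    have hεpos : 0 < lam * ((2:ℝ)^((s:ℝ)/2) * Real.sqrt (llog s)) :=
      mul_pos hlam (hcs_pos s)
    have hg2int : Integrable (fun ω => (g (2^s) ω)^2) μ := by
      have := (hf_mem2 (2^s)).norm.integrable_sq
      simpa [hgdef] using this
    have hdoob := doob_chebyshev hgsub (fun k ω => norm_nonneg _) hg2int hεpos
    have hε2 : (lam * ((2:ℝ)^((s:ℝ)/2) * Real.sqrt (llog s)))^2
        = lam^2 * ((2:ℝ)^(s:ℕ) * llog s) := by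
      have h1 : ((2:ℝ)^((s:ℝ)/2))^(2:ℕ) = (2:ℝ)^(s:ℕ) := by
        rw [← Real.rpow_natCast ((2:ℝ)^((s:ℝ)/2)) 2,
          ← Real.rpow_mul (by norm_num : (0:ℝ) ≤ 2)]
        push_cast
        rw [div_mul_cancel₀ _ (two_ne_zero), Real.rpow_natCast]
      rw [mul_pow, mul_pow, Real.sq_sqrt (by linarith [llog_ge_one (s:ℝ)] : (0:ℝ) ≤ llog s), h1]
    have h2pos : (0:ℝ) < (2:ℝ)^(s:ℕ) := by positivity
    refine hdoob.trans ?_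
    rw [hε2]
    have hnum := hvar (2^s)
    have hcast : ((2^s : ℕ) : ℝ) = (2:ℝ)^(s:ℕ) := by push_cast; ring
    rw [hcast] at hnum
    calc (∫ ω, (g (2^s) ω)^2 ∂μ) / (lam^2 * ((2:ℝ)^(s:ℕ) * llog s))
        ≤ (D^2 * (2:ℝ)^(s:ℕ) * E) / (lam^2 * ((2:ℝ)^(s:ℕ) * llog s)) := by
          gcongr
          exact (mul_pos (pow_pos hlam 2) (mul_pos h2pos (llog_pos (s:ℝ)))).le
      _ = D^2 * E / lam^2 * (1 / llog s) := by
          rw [show lam^2 * ((2:ℝ)^(s:ℕ) * llog s) = ((2:ℝ)^(s:ℕ)) * (lam^2 * llog s) by ring,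
            show D^2 * (2:ℝ)^(s:ℕ) * E = ((2:ℝ)^(s:ℕ)) * (D^2*E) by ring,
            mul_div_mul_left _ _ (ne_of_gt h2pos), mul_one_div, div_div]
  -- inclusion of the event
  set T := {ω | ∃ s ∈ Finset.Icc 1 S, ∃ k ∈ Finset.Icc 1 (2 ^ s),
      lam < ‖birkhoff θ d k ω‖ /
        ((2 : ℝ) ^ ((s : ℝ) / 2) * Real.sqrt (llog (s : ℝ)))} with hTdef
  have hsub : T ⊆ ⋃ s ∈ Finset.Icc 1 S, A s := by
    intro ω hω
    obtain ⟨s, hsmem, k, hkmem, hlt⟩ := hω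
    refine Set.mem_biUnion hsmem ?_
    refine ⟨k, ?_, ?_⟩
    · rw [Finset.mem_range]
      exact Nat.lt_succ_of_le (Finset.mem_Icc.mp hkmem).2
    · rw [lt_div_iff₀ (hcs_pos s)] at hlt
      exact le_of_lt (by rw [mul_comm] at hlt ⊢; exact hlt)
  have hmeasle : μ T ≤ ∑ s ∈ Finset.Icc 1 S, μ (A s) :=
    (measure_mono hsub).trans (measure_biUnion_finset_le _ _)
  have hsumfin : ∑ s ∈ Finset.Icc 1 S, μ (A s) ≠ ⊤ :=
    ENNReal.sum_ne_top.mpr fun s _ => measure_ne_top μ _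
  have h1 : (μ T).toReal ≤ ∑ s ∈ Finset.Icc 1 S, (μ (A s)).toReal := by
    rw [← ENNReal.toReal_sum (fun s _ => measure_ne_top μ _)]
    exact ENNReal.toReal_mono hsumfin hmeasle
  have h2 : ∑ s ∈ Finset.Icc 1 S, (μ (A s)).toReal
      ≤ D^2 * E / lam^2 * ∑ s ∈ Finset.Icc 1 S, 1 / llog s := by
    rw [Finset.mul_sum]
    exact Finset.sum_le_sum fun s hs => hAs s hs
  have h3 : D^2 * E / lam^2 * ∑ s ∈ Finset.Icc 1 S, 1 / llog s
      ≤ D^2 * E / lam^2 * (4 * S / llog S) := by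
    refine mul_le_mul_of_nonneg_left (sum_inv_llog hS) (by positivity)
  have h4 : D^2 * E / lam^2 * (4 * S / llog S)
      = 4 * D ^ 2 * E * S / (lam ^ 2 * llog S) := by
    field_simp
  calc (μ T).toReal ≤ _ := h1
    _ ≤ _ := h2
    _ ≤ _ := h3
    _ = _ := h4

/-- maximal estimate over dyadic blocks for a stationary martingale
difference `d` with values in a `(2,D)`-smooth separable Banach space. -/
theorem stmt0 :
    ∃ C : ℝ, 0 < C ∧
      ∀ (X : Type) [NormedAddCommGroup X] [NormedSpace ℝ X] [CompleteSpace X]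
        [TopologicalSpace.SeparableSpace X],
      ∀ (D : ℝ), 1 ≤ D → SmoothBanach X 2 D →
      ∀ (Ω : Type) [m : MeasurableSpace Ω] (μ : Measure Ω), IsProbabilityMeasure μ →
      ∀ (θ : Ω → Ω), MeasurePreserving θ μ μ →
      ∀ (F0 : MeasurableSpace Ω), F0 ≤ m → F0 ≤ MeasurableSpace.comap θ F0 →
        MeasurableSpace.comap θ F0 ≤ m →
      ∀ (d : Ω → X), MemLp d 2 μ → StronglyMeasurable[MeasurableSpace.comap θ F0] d →
        μ[d | F0] =ᵐ[μ] 0 →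
      ∀ (S : ℕ), 1 ≤ S → ∀ lam : ℝ, 0 < lam →
        (μ {ω | ∃ s ∈ Finset.Icc 1 S, ∃ k ∈ Finset.Icc 1 (2 ^ s),
            lam < ‖birkhoff θ d k ω‖ /
              ((2 : ℝ) ^ ((s : ℝ) / 2) * Real.sqrt (llog (s : ℝ)))}).toReal ≤
          C * D ^ 2 * (∫ ω, ‖d ω‖ ^ 2 ∂μ) * (S : ℝ) / (lam ^ 2 * llog (S : ℝ)) := by
  refine ⟨4, by norm_num, ?_⟩
  intro X _ _ _ _ D hD hsmooth Ω m μ hprob θ hθ F0 hF0m hF0θ hθF0m d hd2 hdsm hd0 S hS lam hlam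
  exact helper (m := m) F0 μ D hD hsmooth θ hθ hF0m hF0θ hθF0m d hd2 hdsm hd0 S hS lam hlam
end

section
/- Let (Ω,F,P) be a probability space, X and B Banach spaces, C a vector space of measurable X-valued functions on Ω, and (T_n) a sequence of linear maps from B to C. Assume there is a positive decreasing function L on (0,∞) with L(λ) → 0 as λ → ∞ such that P(sup_n |T_n x|_X > λ|x|_B) ≤ L(λ) for all λ > 0 and x ∈ B. Then the set {x ∈ B : |T_n x|_X → 0 P-a.s.} is closed in B. -/
open MeasureTheory Filter

/-- Banach principle. Under a uniform weak-type maximal estimate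
`P(sup_n ‖T_n x‖ > λ‖x‖) ≤ L(λ)` with `L` positive, decreasing and vanishing at
infinity, the set `{x : T_n x → 0 a.s.}` is closed in `B`. -/
theorem stmt6
    (Ω : Type*) [m : MeasurableSpace Ω] (μ : Measure Ω) [IsProbabilityMeasure μ]
    (X : Type*) [NormedAddCommGroup X] [NormedSpace ℝ X] [CompleteSpace X]
    (B : Type*) [NormedAddCommGroup B] [NormedSpace ℝ B] [CompleteSpace B]
    (T : ℕ → B →ₗ[ℝ] (Ω → X))
    (hmeas : ∀ n x, AEStronglyMeasurable (T n x) μ)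
    (L : ℝ → ℝ) (hLpos : ∀ l : ℝ, 0 < l → 0 < L l)
    (hLanti : AntitoneOn L (Set.Ioi (0 : ℝ)))
    (hLlim : Tendsto L atTop (nhds 0))
    (hmax : ∀ (l : ℝ), 0 < l → ∀ x : B,
      (μ {ω | ∃ n : ℕ, l * ‖x‖ < ‖T n x ω‖}).toReal ≤ L l) :
    IsClosed {x : B | ∀ᵐ ω ∂μ, Tendsto (fun n => ‖T n x ω‖) atTop (nhds 0)} := by
  apply IsSeqClosed.isClosed
  intro y x hy hyx
  -- key : for each ε > 0, the set where `ε < ‖T n x ω‖` frequently is null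
  have key : ∀ ε : ℝ, 0 < ε →
      μ {ω | ∃ᶠ n in atTop, ε < ‖T n x ω‖} = 0 := by
    intro ε hε
    set E := {ω | ∃ᶠ n in atTop, ε < ‖T n x ω‖} with hE
    have hle : ∀ δ : ℝ, 0 < δ → (μ E).toReal ≤ δ := by
      intro δ hδ
      -- choose l with L l < δ
      obtain ⟨l, hl1, hlδ⟩ :=
        (((tendsto_order.1 hLlim).2 δ hδ).and (eventually_ge_atTop (1:ℝ))).exists
      have hl0 : (0:ℝ) < l := lt_of_lt_of_le one_pos hlδ
      -- choose approximant z with l * ‖x - z‖ < ε/2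
      obtain ⟨N, hN⟩ := (Metric.tendsto_atTop.1 hyx) (ε / (2 * l))
        (by positivity)
      set z := y N with hz
      have hxz : ‖x - z‖ < ε / (2 * l) := by
        have := hN N le_rfl
        rwa [dist_eq_norm, norm_sub_rev] at this
      have hxzl : l * ‖x - z‖ < ε / 2 := by
        have := (mul_lt_mul_of_pos_left hxz hl0)
        calc l * ‖x - z‖ < l * (ε / (2 * l)) := this
          _ = ε / 2 := by field_simp
      set F := {ω | ∃ n : ℕ, l * ‖x - z‖ < ‖T n (x - z) ω‖} with hF
      -- E ⊆ F almost everywhere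
      have hEF : ∀ᵐ ω ∂μ, ω ∈ E → ω ∈ F := by
        filter_upwards [hy N] with ω hω hωE
        have hev : ∀ᶠ n in atTop, ‖T n z ω‖ < ε / 2 :=
          hω.eventually (gt_mem_nhds (half_pos hε))
        obtain ⟨n, hn1, hn2⟩ := (hωE.and_eventually hev).exists
        refine ⟨n, ?_⟩
        have heq : T n (x - z) ω = T n x ω - T n z ω := by
          rw [map_sub]; rfl
        have : ε / 2 < ‖T n (x - z) ω‖ := by
          rw [heq]
          calc ε / 2 = ε - ε / 2 := by ring
            _ < ‖T n x ω‖ - ‖T n z ω‖ := by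
                exact sub_lt_sub hn1 hn2
            _ ≤ ‖T n x ω - T n z ω‖ := norm_sub_norm_le _ _
        exact hxzl.trans this
      have hμEF : μ E ≤ μ F := measure_mono_ae hEF
      have : (μ E).toReal ≤ (μ F).toReal :=
        ENNReal.toReal_mono (measure_ne_top μ F) hμEF
      exact this.trans ((hmax l hl0 (x - z)).trans hl1.le)
    have h0 : (μ E).toReal = 0 :=
      le_antisymm (le_of_forall_pos_le_add (by simpa using hle))
        ENNReal.toReal_nonneg
    have := (ENNReal.toReal_eq_zero_iff _).1 h0
    rcases this with h | h
    · exact h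
    · exact absurd h (measure_ne_top μ E)
  have hall : ∀ᵐ ω ∂μ, ∀ k : ℕ, ¬ (∃ᶠ n in atTop, ((k:ℝ)+1)⁻¹ < ‖T n x ω‖) := by
    rw [ae_all_iff]
    intro k
    have hk : (0:ℝ) < ((k:ℝ)+1)⁻¹ := by positivity
    exact measure_eq_zero_iff_ae_notMem.mp (key _ hk)
  filter_upwards [hall] with ω hω
  rw [NormedAddCommGroup.tendsto_nhds_zero]
  intro ε hε
  obtain ⟨k, hk⟩ := exists_nat_gt ε⁻¹
  have hkε : ((k:ℝ)+1)⁻¹ < ε := by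
    rw [inv_lt_comm₀ (by positivity) hε]
    exact hk.trans (lt_add_one _)
  have := hω k
  rw [not_frequently] at this
  filter_upwards [this] with n hn
  rw [norm_norm]
  push_neg at hn
  exact lt_of_le_of_lt hn hkε
end

section
/- Let (Ω,F,P) be a probability space, X a Banach space, B a Banach space, and (T_n) linear maps from B to measurable X-valued functions satisfying P(sup_n |T_n x|_X > λ|x|_B) ≤ L(λ) for a decreasing function L with L(λ)→0 at infinity. Then the set {x ∈ B : (T_n x(ω))_{n≥1} is relatively compact in X for P-a.e. ω} is closed in B. -/
open MeasureTheory Filter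

/-- Banach principle for almost sure relative compactness. Under a uniform
weak-type maximal estimate, the set `{x : (T_n x(ω))_n is relatively compact in X a.s.}`
is closed in `B`. -/
theorem stmt7
    (Ω : Type*) [m : MeasurableSpace Ω] (μ : Measure Ω) [IsProbabilityMeasure μ]
    (X : Type*) [NormedAddCommGroup X] [NormedSpace ℝ X] [CompleteSpace X]
    (B : Type*) [NormedAddCommGroup B] [NormedSpace ℝ B] [CompleteSpace B]
    (T : ℕ → B →ₗ[ℝ] (Ω → X))
    (hmeas : ∀ n x, AEStronglyMeasurable (T n x) μ)
    (L : ℝ → ℝ) (hLpos : ∀ l : ℝ, 0 < l → 0 < L l)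
    (hLanti : AntitoneOn L (Set.Ioi (0 : ℝ)))
    (hLlim : Tendsto L atTop (nhds 0))
    (hmax : ∀ (l : ℝ), 0 < l → ∀ x : B,
      (μ {ω | ∃ n : ℕ, l * ‖x‖ < ‖T n x ω‖}).toReal ≤ L l) :
    IsClosed {x : B | ∀ᵐ ω ∂μ,
      IsCompact (closure (Set.range (fun n : ℕ => T n x ω)))} := by
  set S := {x : B | ∀ᵐ ω ∂μ,
      IsCompact (closure (Set.range (fun n : ℕ => T n x ω)))} with hSdef
  apply IsSeqClosed.isClosed
  intro s x hs hsx
  -- For each k, choose a threshold l k and a point z k ∈ S close to x.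
  have hchoice : ∀ k : ℕ, ∃ l : ℝ, 0 < l ∧ L l < (1/2 : ℝ)^k ∧
      ∃ z, z ∈ S ∧ l * ‖x - z‖ < 1/((k:ℝ)+1) := by
    intro k
    have hpos : (0:ℝ) < (1/2 : ℝ)^k := by positivity
    obtain ⟨l, hl1, hl2⟩ := ((hLlim.eventually (gt_mem_nhds hpos)).and
      (eventually_gt_atTop 0)).exists
    refine ⟨l, hl2, hl1, ?_⟩
    have hk : (0:ℝ) < (1/((k:ℝ)+1)) / l := by positivity
    obtain ⟨N, hN⟩ := Metric.tendsto_atTop.mp hsx _ hk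
    refine ⟨s N, hs N, ?_⟩
    have h1 : ‖x - s N‖ < (1/((k:ℝ)+1)) / l := by
      have := hN N le_rfl
      rwa [dist_eq_norm, ← norm_neg, neg_sub] at this
    calc l * ‖x - s N‖ < l * ((1/((k:ℝ)+1)) / l) :=
          mul_lt_mul_of_pos_left h1 hl2
      _ = 1/((k:ℝ)+1) := mul_div_cancel₀ _ hl2.ne'
  choose l hlpos hLl z hzS hlz using hchoice
  set A : ℕ → Set Ω := fun k =>
    {ω | ∃ n : ℕ, l k * ‖x - z k‖ < ‖T n (x - z k) ω‖} with hAdef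
  have hAk : ∀ k, μ (A k) ≤ ENNReal.ofReal ((1/2 : ℝ)^k) := by
    intro k
    have h1 := hmax (l k) (hlpos k) (x - z k)
    have h2 : μ (A k) = ENNReal.ofReal ((μ (A k)).toReal) :=
      (ENNReal.ofReal_toReal (measure_ne_top μ _)).symm
    rw [h2]
    exact ENNReal.ofReal_le_ofReal (h1.trans (hLl k).le)
  have hsum : ∑' k, μ (A k) ≠ ⊤ := by
    have h1 : ∑' k, μ (A k) ≤ ∑' k : ℕ, ENNReal.ofReal ((1/2 : ℝ)^k) :=
      ENNReal.tsum_le_tsum hAk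
    have h2 : ∑' k : ℕ, ENNReal.ofReal ((1/2 : ℝ)^k)
        = ENNReal.ofReal (∑' k : ℕ, (1/2 : ℝ)^k) :=
      (ENNReal.ofReal_tsum_of_nonneg (fun _ => by positivity)
        (summable_geometric_of_lt_one (by norm_num) (by norm_num))).symm
    exact ne_top_of_le_ne_top (by rw [h2]; exact ENNReal.ofReal_ne_top) h1
  have hBC : ∀ᵐ ω ∂μ, {k | ω ∈ A k}.Finite := ae_finite_setOf_mem hsum
  have hall : ∀ᵐ ω ∂μ, ∀ k, IsCompact (closure (Set.range (fun n : ℕ => T n (z k) ω))) :=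
    ae_all_iff.mpr fun k => hzS k
  filter_upwards [hBC, hall] with ω hfin hcomp
  -- off finitely many k, we have the uniform bound
  obtain ⟨K, hK⟩ : ∃ K : ℕ, ∀ k ≥ K, ω ∉ A k := by
    obtain ⟨K, hK⟩ := hfin.bddAbove
    exact ⟨K + 1, fun k hk hmem => absurd (hK hmem) (by omega)⟩
  -- totally bounded
  have htb : TotallyBounded (Set.range (fun n : ℕ => T n x ω)) := by
    rw [Metric.totallyBounded_iff]
    intro ε hε
    obtain ⟨n0, hn0⟩ := exists_nat_one_div_lt (half_pos hε)
    set k := max K n0 with hkdef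
    have hk1 : 1/((k:ℝ)+1) < ε/2 := by
      refine lt_of_le_of_lt ?_ hn0
      apply one_div_le_one_div_of_le (by positivity)
      have : (n0:ℝ) ≤ (k:ℝ) := by exact_mod_cast le_max_right K n0
      linarith
    have hbound : ∀ n : ℕ, ‖T n (x - z k) ω‖ < ε/2 := by
      intro n
      have h1 : ¬ (l k * ‖x - z k‖ < ‖T n (x - z k) ω‖) := by
        intro hlt
        exact hK k (le_max_left K n0) ⟨n, hlt⟩
      push_neg at h1
      exact h1.trans_lt ((hlz k).trans hk1)
    have htbz : TotallyBounded (Set.range (fun n : ℕ => T n (z k) ω)) :=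
      ((hcomp k).totallyBounded).subset subset_closure
    obtain ⟨t, htfin, htcov⟩ := (Metric.totallyBounded_iff.mp htbz) (ε/2) (half_pos hε)
    refine ⟨t, htfin, ?_⟩
    rintro _ ⟨n, rfl⟩
    obtain ⟨y, hyt, hy⟩ := Set.mem_iUnion₂.mp (htcov ⟨n, rfl⟩)
    refine Set.mem_iUnion₂.mpr ⟨y, hyt, ?_⟩
    have hsub : T n x ω - T n (z k) ω = T n (x - z k) ω := by
      rw [map_sub]; rfl
    have : dist (T n x ω) y ≤ dist (T n x ω) (T n (z k) ω) + dist (T n (z k) ω) y :=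
      dist_triangle _ _ _
    have hd1 : dist (T n x ω) (T n (z k) ω) < ε/2 := by
      rw [dist_eq_norm, hsub]; exact hbound n
    have hd2 : dist (T n (z k) ω) y < ε/2 := Metric.mem_ball.mp hy
    exact Metric.mem_ball.mpr (by linarith)
  exact TotallyBounded.isCompact_of_isClosed
    (totallyBounded_closure.mpr htb) isClosed_closure
end

section
/- Let H be a separable Hilbert space, θ an invertible bi-measurable measure-preserving transformation, (F_n)_{n∈Z} a filtration with F_n = θ^{-n}F_0, P_n = E(·|F_n) − E(·|F_{n-1}), and X ∈ L^2(Ω,H). Then for every n ≥ 0, ( Σ_{k=2^n}^{2^{n+1}-1} ||P_{-k}X||_{2,H} )^2 ≤ 2^n E(|E(X|F_{-2^n})|_H^2). Consequently, if Σ_{n≥1} ||E(X|F_{-n})||_{2,H}/√n < ∞ and Σ_{n≥1} ||X − E(X|F_n)||_{2,H}/√n < ∞, then Σ_{n∈Z} ||P_n X||_{2,H} < ∞. -/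
open MeasureTheory Filter Real

/-- The `L²(μ,H)` norm `‖f‖₂ = (E‖f‖²)^{1/2}`. -/
noncomputable def l2norm {Ω H : Type} (m : MeasurableSpace Ω) [NormedAddCommGroup H]
    (μ : @Measure Ω m) (f : Ω → H) : ℝ :=
  Real.sqrt (∫ ω, ‖f ω‖ ^ 2 ∂μ)

/-- The martingale difference projection `P_n = E(·|F_n) − E(·|F_{n-1})`. -/
noncomputable def Pproj {Ω H : Type} (m : MeasurableSpace Ω) [NormedAddCommGroup H]
    [InnerProductSpace ℝ H] [CompleteSpace H] (μ : @Measure Ω m)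
    (F : ℤ → MeasurableSpace Ω) (n : ℤ) (f : Ω → H) : Ω → H :=
  fun ω => (μ[f | F n]) ω - (μ[f | F (n - 1)]) ω

private lemma sum_blocks8 (q : ℕ → ℝ) (N : ℕ) :
    ∑ n ∈ Finset.range N, ∑ k ∈ Finset.Ico (2 ^ n) (2 ^ (n + 1)), q k
      = ∑ k ∈ Finset.Ico 1 (2 ^ N), q k := by
  induction N with
  | zero => simp
  | succ N ih =>
      rw [Finset.sum_range_succ, ih,
        Finset.sum_Ico_consecutive q Nat.one_le_two_pow
          (Nat.pow_le_pow_right two_pos N.le_succ)]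

private lemma summable_of_blocks8 {u t : ℕ → ℝ} (hu : ∀ k, 0 ≤ u k)
    (hb : ∀ n, ∑ k ∈ Finset.Ico (2 ^ n) (2 ^ (n + 1)), u k ≤ t n)
    (ht : Summable t) (ht0 : ∀ n, 0 ≤ t n) : Summable u := by
  refine summable_of_sum_range_le hu (c := u 0 + ∑' n, t n) fun N => ?_
  calc ∑ k ∈ Finset.range N, u k
      ≤ ∑ k ∈ Finset.range (2 ^ N), u k :=
        Finset.sum_le_sum_of_subset_of_nonneg
          (Finset.range_subset_range.2 (Nat.lt_two_pow_self (n := N)).le) (fun k _ _ => hu k)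
    _ = u 0 + ∑ k ∈ Finset.Ico 1 (2 ^ N), u k := by
        rw [Finset.range_eq_Ico,
          ← Finset.sum_Ico_consecutive u (Nat.zero_le 1) Nat.one_le_two_pow]
        simp
    _ ≤ u 0 + ∑' n, t n := by
        rw [← sum_blocks8 u N]
        exact add_le_add (le_refl _)
          ((Finset.sum_le_sum fun n _ => hb n).trans
            (ht.sum_le_tsum _ (fun n _ => ht0 n)))

private lemma cond_sum8 {w : ℕ → ℝ} (hw0 : ∀ k, 0 ≤ w k)
    (hwa : ∀ i j : ℕ, i ≤ j → w j ≤ w i)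
    (hs : Summable fun k : ℕ => w (k + 1) / Real.sqrt (k + 1)) :
    Summable fun n : ℕ => Real.sqrt (2 ^ n) * w (2 ^ n) := by
  set s : ℕ → ℝ := fun k => w (k + 1) / Real.sqrt (k + 1) with hsdef
  have hs0 : ∀ k, 0 ≤ s k := fun k =>
    div_nonneg (hw0 _) (Real.sqrt_nonneg _)
  have key : ∀ n : ℕ, Real.sqrt (2 ^ (n + 1)) * w (2 ^ (n + 1))
      ≤ 2 * ∑ k ∈ Finset.Ico (2 ^ n) (2 ^ (n + 1)), s k := by
    intro n
    have hpos : (0 : ℝ) < Real.sqrt (2 ^ (n + 1)) :=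
      Real.sqrt_pos.2 (by positivity)
    have hterm : ∀ k ∈ Finset.Ico (2 ^ n) (2 ^ (n + 1)),
        w (2 ^ (n + 1)) / Real.sqrt (2 ^ (n + 1)) ≤ s k := by
      intro k hk
      rw [Finset.mem_Ico] at hk
      have hk1 : (k : ℝ) + 1 ≤ 2 ^ (n + 1) := by
        have : k + 1 ≤ 2 ^ (n + 1) := hk.2
        exact_mod_cast this
      refine div_le_div₀ (hw0 _) (hwa _ _ hk.2) (Real.sqrt_pos.2 (by positivity)) ?_
      calc Real.sqrt ((k : ℝ) + 1) ≤ Real.sqrt (2 ^ (n + 1)) := Real.sqrt_le_sqrt hk1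
        _ = _ := by norm_num
    have hsum : (Finset.Ico (2 ^ n) (2 ^ (n + 1))).card
        • (w (2 ^ (n + 1)) / Real.sqrt (2 ^ (n + 1)))
          ≤ ∑ k ∈ Finset.Ico (2 ^ n) (2 ^ (n + 1)), s k :=
      Finset.card_nsmul_le_sum _ _ _ hterm
    have hcard : (Finset.Ico (2 ^ n) (2 ^ (n + 1))).card = 2 ^ n := by
      rw [Nat.card_Ico]
      have : 2 ^ (n + 1) = 2 * 2 ^ n := by ring
      omega
    rw [hcard] at hsum
    have h2 : ((2 ^ n : ℕ) : ℝ) = 2 ^ n := by push_cast; ring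
    rw [nsmul_eq_mul, h2] at hsum
    have heq : Real.sqrt (2 ^ (n + 1)) * w (2 ^ (n + 1))
        = 2 * ((2 : ℝ) ^ n * (w (2 ^ (n + 1)) / Real.sqrt (2 ^ (n + 1)))) := by
      have hS : Real.sqrt ((2:ℝ) ^ (n+1)) * Real.sqrt ((2:ℝ) ^ (n+1)) = (2:ℝ) ^ (n+1) :=
        Real.mul_self_sqrt (by positivity)
      field_simp
      linear_combination w (2 ^ (n + 1)) * hS
    rw [heq]
    nlinarith [hsum]
  have hshift : Summable fun n : ℕ => Real.sqrt (2 ^ (n + 1)) * w (2 ^ (n + 1)) := by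
    refine summable_of_sum_range_le
      (fun n => mul_nonneg (Real.sqrt_nonneg _) (hw0 _)) (c := 2 * ∑' k, s k) fun N => ?_
    calc ∑ n ∈ Finset.range N, Real.sqrt (2 ^ (n + 1)) * w (2 ^ (n + 1))
        ≤ ∑ n ∈ Finset.range N, 2 * ∑ k ∈ Finset.Ico (2 ^ n) (2 ^ (n + 1)), s k :=
          Finset.sum_le_sum fun n _ => key n
      _ = 2 * ∑ k ∈ Finset.Ico 1 (2 ^ N), s k := by
          rw [← Finset.mul_sum, sum_blocks8]
      _ ≤ 2 * ∑' k, s k := by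
          have := hs.sum_le_tsum (Finset.Ico 1 (2 ^ N)) (fun k _ => hs0 k)
          linarith
  exact (summable_nat_add_iff 1).1 hshift

private lemma sum_negcast_Icc8 (q : ℤ → ℝ) (A B : ℕ) :
    ∑ k ∈ Finset.Icc A B, q (-(k : ℤ)) = ∑ j ∈ Finset.Icc (-(B : ℤ)) (-(A : ℤ)), q j := by
  refine Finset.sum_nbij' (fun k => -(k : ℤ)) (fun j => (-j).toNat) ?_ ?_ ?_ ?_ ?_ <;>
    intro a ha <;> simp only [Finset.mem_Icc] at * <;> try omega

private lemma sum_cast_Icc8 (q : ℤ → ℝ) (A B : ℕ) :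
    ∑ k ∈ Finset.Icc A B, q (k : ℤ) = ∑ j ∈ Finset.Icc (A : ℤ) (B : ℤ), q j := by
  refine Finset.sum_nbij' (fun k => (k : ℤ)) (fun j => j.toNat) ?_ ?_ ?_ ?_ ?_ <;>
    intro a ha <;> simp only [Finset.mem_Icc] at * <;> try omega

set_option maxHeartbeats 1000000 in
private lemma sum_neg_Icc8 (q : ℤ → ℝ) (A B : ℤ) :
    ∑ k ∈ Finset.Icc A B, q (-k) = ∑ j ∈ Finset.Icc (-B) (-A), q j := by
  refine Finset.sum_nbij' (fun k => -k) (fun j => -j) ?_ ?_ ?_ ?_ ?_ <;>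
    intro a ha <;> simp only [Finset.mem_Icc] at * <;> try omega

set_option maxHeartbeats 2000000 in
theorem stmt8
    (H : Type) [NormedAddCommGroup H] [InnerProductSpace ℝ H] [CompleteSpace H]
    [TopologicalSpace.SeparableSpace H]
    (Ω : Type) [m : MeasurableSpace Ω] (μ : Measure Ω) [IsProbabilityMeasure μ]
    (θ θ' : Ω → Ω) (hθ : MeasurePreserving θ μ μ) (hθ' : Measurable θ')
    (hli : Function.LeftInverse θ' θ) (hri : Function.RightInverse θ' θ)
    (F : ℤ → MeasurableSpace Ω) (hmono : Monotone F) (hle : ∀ n, F n ≤ m)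
    (hFθ : ∀ n : ℤ, F (n + 1) = MeasurableSpace.comap θ (F n))
    (X : Ω → H) (hX : MemLp X 2 μ) :
    (∀ n : ℕ,
      (∑ k ∈ Finset.Icc (2 ^ n) (2 ^ (n + 1) - 1),
          l2norm m μ (Pproj m μ F (-(k : ℤ)) X)) ^ 2 ≤
        2 ^ n * ∫ ω, ‖(μ[X | F (-(2 ^ n : ℕ) : ℤ)]) ω‖ ^ 2 ∂μ) ∧
    ((Summable (fun n : ℕ =>
          l2norm m μ (μ[X | F (-(n : ℤ) - 1)]) / Real.sqrt ((n : ℝ) + 1)) ∧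
      Summable (fun n : ℕ =>
          l2norm m μ (fun ω => X ω - (μ[X | F ((n : ℤ) + 1)]) ω) /
            Real.sqrt ((n : ℝ) + 1))) →
      Summable (fun n : ℤ => l2norm m μ (Pproj m μ F n X))) := by
  classical
  set f : Lp H 2 μ := hX.toLp X with hfdef
  set G : ℤ → Lp H 2 μ := fun n => (condExpL2 H ℝ (hle n) f : Lp H 2 μ) with hGdef
  -- measurability of G n
  have hmeasG : ∀ n j : ℤ, n ≤ j → AEStronglyMeasurable[F j] (⇑(G n)) μ := fun n j h =>
    (aestronglyMeasurable_condExpL2 (hle n) f).mono (hmono h)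
  -- inner product identity
  have hinner : ∀ (j : ℤ) (v : Lp H 2 μ), AEStronglyMeasurable[F j] (⇑v) μ →
      (inner ℝ (G j) v : ℝ) = inner ℝ f v := fun j v hv =>
    inner_condExpL2_eq_inner_fun (hle j) f v hv
  -- G n is a version of the conditional expectation
  have hGcond : ∀ n : ℤ, (⇑(G n) : Ω → H) =ᵐ[μ] μ[X | F n] := by
    intro n
    refine ae_eq_condExp_of_forall_setIntegral_eq (hle n)
      (hX.integrable one_le_two)
      (fun s _ hμs => integrableOn_condExpL2_of_measure_ne_top (hle n) hμs.ne f)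
      (fun s hs hμs => ?_) (aestronglyMeasurable_condExpL2 (hle n) f)
    rw [integral_condExpL2_eq (hle n) f hs hμs.ne]
    exact setIntegral_congr_ae ((hle n) s hs)
      ((hX.coeFn_toLp).mono fun x hx _ => hx)
  -- l2norm of a version equals Lp norm
  have hl2 : ∀ (h : Lp H 2 μ) (φ : Ω → H), φ =ᵐ[μ] ⇑h → l2norm m μ φ = ‖h‖ := by
    intro h φ hφ
    have h1 : ∫ ω, ‖φ ω‖ ^ 2 ∂μ = ∫ ω, ‖h ω‖ ^ 2 ∂μ :=
      integral_congr_ae (hφ.mono fun ω hω => by dsimp only; rw [hω])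
    have h2 : ‖h‖ ^ 2 = ∫ ω, ‖h ω‖ ^ 2 ∂μ := by
      rw [← real_inner_self_eq_norm_sq, L2.inner_def]
      exact integral_congr_ae (Eventually.of_forall fun ω => real_inner_self_eq_norm_sq _)
    rw [l2norm, h1, ← h2, Real.sqrt_sq (norm_nonneg _)]
  have hGint : ∀ b : ℤ, ∫ ω, ‖(μ[X | F b]) ω‖ ^ 2 ∂μ = ‖G b‖ ^ 2 := by
    intro b
    rw [← hl2 (G b) _ (hGcond b).symm, l2norm,
      Real.sq_sqrt (integral_nonneg fun ω => sq_nonneg _)]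
  -- the difference projections
  have hD : ∀ n : ℤ, (Pproj m μ F n X) =ᵐ[μ] ⇑(G n - G (n - 1)) := by
    intro n
    filter_upwards [hGcond n, hGcond (n - 1), Lp.coeFn_sub (G n) (G (n - 1))] with ω h1 h2 h3
    simp only [Pproj, h3, Pi.sub_apply, h1, h2]
  have hu : ∀ n : ℤ, l2norm m μ (Pproj m μ F n X) = ‖G n - G (n - 1)‖ := fun n =>
    hl2 _ _ (hD n)
  -- orthogonality step
  have hstepinner : ∀ i j : ℤ, i ≤ j →
      ∀ v : Lp H 2 μ, AEStronglyMeasurable[F i] (⇑v) μ →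
      (inner ℝ (G j) v : ℝ) = inner ℝ f v := fun i j hij v hv =>
    hinner j v (hv.mono (hmono hij))
  have horthG : ∀ b : ℤ, (inner ℝ (G b) (G (b + 1) - G b) : ℝ) = 0 := by
    intro b
    rw [real_inner_comm, inner_sub_left,
      hstepinner b (b + 1) (by omega) (G b) (hmeasG b b le_rfl),
      hinner b (G b) (hmeasG b b le_rfl), sub_self]
  -- Pythagoras
  have hpyth0 : ∀ (a : ℤ) (N : ℕ),
      ‖G a‖ ^ 2 + ∑ k ∈ Finset.Icc (a + 1) (a + (N : ℤ)), ‖G k - G (k - 1)‖ ^ 2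
        = ‖G (a + (N : ℤ))‖ ^ 2 := by
    intro a N
    induction N with
    | zero => simp
    | succ N ih =>
        have hc : (((N + 1 : ℕ)) : ℤ) = (N : ℤ) + 1 := by push_cast; ring
        rw [hc, ← add_assoc]
        have hins : Finset.Icc (a + 1) (a + (N : ℤ) + 1)
            = insert (a + (N : ℤ) + 1) (Finset.Icc (a + 1) (a + (N : ℤ))) := by
          ext x; simp only [Finset.mem_Icc, Finset.mem_insert]; omega
        rw [hins, Finset.sum_insert (by simp only [Finset.mem_Icc]; omega)]
        have key : ‖G (a + (N : ℤ))‖ ^ 2 + ‖G (a + (N : ℤ) + 1) - G (a + (N : ℤ))‖ ^ 2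
            = ‖G (a + (N : ℤ) + 1)‖ ^ 2 := by
          have h3 : G (a + (N : ℤ) + 1)
              = G (a + (N : ℤ)) + (G (a + (N : ℤ) + 1) - G (a + (N : ℤ))) := by abel
          calc ‖G (a + (N : ℤ))‖ ^ 2 + ‖G (a + (N : ℤ) + 1) - G (a + (N : ℤ))‖ ^ 2
              = ‖G (a + (N : ℤ)) + (G (a + (N : ℤ) + 1) - G (a + (N : ℤ)))‖ ^ 2 := by
                rw [norm_add_sq_real, horthG (a + (N : ℤ))]; ring
            _ = ‖G (a + (N : ℤ) + 1)‖ ^ 2 := by rw [← h3]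
        have hsimp : a + (N : ℤ) + 1 - 1 = a + (N : ℤ) := by ring
        rw [hsimp]
        linarith [ih, key]
  have hpyth : ∀ a b : ℤ, a ≤ b →
      ‖G a‖ ^ 2 + ∑ k ∈ Finset.Icc (a + 1) b, ‖G k - G (k - 1)‖ ^ 2 = ‖G b‖ ^ 2 := by
    intro a b hab
    have h := hpyth0 a (b - a).toNat
    have hh : a + ((b - a).toNat : ℤ) = b := by omega
    rwa [hh] at h
  have hsumsq : ∀ a b : ℤ, a ≤ b →
      ∑ k ∈ Finset.Icc (a + 1) b, ‖G k - G (k - 1)‖ ^ 2 = ‖G b‖ ^ 2 - ‖G a‖ ^ 2 := by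
    intro a b hab
    have := hpyth a b hab; linarith
  have hGmono : ∀ a b : ℤ, a ≤ b → ‖G a‖ ≤ ‖G b‖ := by
    intro a b hab
    have h := hpyth a b hab
    have hs : 0 ≤ ∑ k ∈ Finset.Icc (a + 1) b, ‖G k - G (k - 1)‖ ^ 2 :=
      Finset.sum_nonneg fun k _ => sq_nonneg _
    nlinarith [norm_nonneg (G a), norm_nonneg (G b)]
  have hGlef : ∀ b : ℤ, ‖G b‖ ≤ ‖f‖ := fun b => norm_condExpL2_coe_le (hle b) f
  have hresid : ∀ a : ℤ, ‖G a‖ ^ 2 + ‖f - G a‖ ^ 2 = ‖f‖ ^ 2 := by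
    intro a
    have h0 : (inner ℝ (G a) (f - G a) : ℝ) = 0 := by
      rw [real_inner_comm, inner_sub_left, hinner a (G a) (hmeasG a a le_rfl), sub_self]
    have h3 : f = G a + (f - G a) := by abel
    calc ‖G a‖ ^ 2 + ‖f - G a‖ ^ 2
        = ‖G a + (f - G a)‖ ^ 2 := by rw [norm_add_sq_real, h0]; ring
      _ = ‖f‖ ^ 2 := by rw [← h3]
  -- residual norms
  have hresid_eq : ∀ n : ℕ,
      l2norm m μ (fun ω => X ω - (μ[X | F ((n : ℤ) + 1)]) ω) = ‖f - G ((n : ℤ) + 1)‖ := by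
    intro n
    refine hl2 _ _ ?_
    filter_upwards [hX.coeFn_toLp, hGcond ((n : ℤ) + 1),
      Lp.coeFn_sub f (G ((n : ℤ) + 1))] with ω h1 h2 h3
    simp only [h3, Pi.sub_apply, h2]; rw [hfdef, h1]
  -- PART 1 (generalized)
  have hle_pow : ∀ n : ℕ, (-(2:ℤ) ^ (n + 1)) ≤ -((2 ^ n : ℕ) : ℤ) := by
    intro n
    have hpos : (0:ℤ) < 2 ^ n := pow_pos (by norm_num) n
    have h2 : (2:ℤ) ^ (n + 1) = 2 * 2 ^ n := by ring
    have hc : ((2 ^ n : ℕ) : ℤ) = (2:ℤ) ^ n := by push_cast; ring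
    rw [hc]; linarith
  have part1 : ∀ n : ℕ,
      (∑ k ∈ Finset.Icc (2 ^ n) (2 ^ (n + 1) - 1),
          l2norm m μ (Pproj m μ F (-(k : ℤ)) X)) ^ 2 ≤
        2 ^ n * ∫ ω, ‖(μ[X | F (-(2 ^ n : ℕ) : ℤ)]) ω‖ ^ 2 ∂μ := by
    intro n
    have hcard : (Finset.Icc ((2:ℤ) ^ n) (2 ^ (n + 1) - 1)).card = 2 ^ n := by
      rw [Int.card_Icc]
      have h2 : (2:ℤ) ^ (n + 1) - 1 + 1 - 2 ^ n = ((2 ^ n : ℕ) : ℤ) := by push_cast; ring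
      rw [h2, Int.toNat_natCast]
    have hCS := sq_sum_le_card_mul_sum_sq
      (s := Finset.Icc ((2:ℤ) ^ n) (2 ^ (n + 1) - 1))
      (f := fun k : ℤ => l2norm m μ (Pproj m μ F (-k) X))
    rw [hcard] at hCS
    have hre : ∑ k ∈ Finset.Icc ((2:ℤ) ^ n) (2 ^ (n + 1) - 1),
        l2norm m μ (Pproj m μ F (-k) X) ^ 2
          = ∑ j ∈ Finset.Icc (-((2:ℤ) ^ (n + 1) - 1)) (-((2:ℤ) ^ n)),
              ‖G j - G (j - 1)‖ ^ 2 := by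
      rw [← sum_neg_Icc8 (fun j => ‖G j - G (j - 1)‖ ^ 2) ((2:ℤ) ^ n) (2 ^ (n + 1) - 1)]
      refine Finset.sum_congr rfl fun k _ => ?_
      rw [hu]
    have hkey : ∑ j ∈ Finset.Icc (-((2:ℤ) ^ (n + 1) - 1)) (-((2:ℤ) ^ n)),
        ‖G j - G (j - 1)‖ ^ 2
          ≤ ∫ ω, ‖(μ[X | F (-(2 ^ n : ℕ) : ℤ)]) ω‖ ^ 2 ∂μ := by
      have hstart : (-((2:ℤ) ^ (n + 1) - 1)) = (-(2:ℤ) ^ (n + 1)) + 1 := by ring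
      have hend : (-(2:ℤ) ^ n) = (-((2 ^ n : ℕ) : ℤ)) := by push_cast; ring
      rw [hstart, hend, hsumsq _ _ (hle_pow n), hGint]
      nlinarith [sq_nonneg ‖G (-(2:ℤ) ^ (n + 1))‖]
    have hc2 : ((2 ^ n : ℕ) : ℝ) = (2:ℝ) ^ n := by push_cast; ring
    calc (∑ k ∈ Finset.Icc ((2:ℤ) ^ n) (2 ^ (n + 1) - 1),
            l2norm m μ (Pproj m μ F (-k) X)) ^ 2
        ≤ ((2 ^ n : ℕ) : ℝ) * ∑ k ∈ Finset.Icc ((2:ℤ) ^ n) (2 ^ (n + 1) - 1),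
            l2norm m μ (Pproj m μ F (-k) X) ^ 2 := hCS
      _ = (2:ℝ) ^ n * ∑ k ∈ Finset.Icc ((2:ℤ) ^ n) (2 ^ (n + 1) - 1),
            l2norm m μ (Pproj m μ F (-k) X) ^ 2 := by rw [hc2]
      _ ≤ 2 ^ n * ∫ ω, ‖(μ[X | F (-(2 ^ n : ℕ) : ℤ)]) ω‖ ^ 2 ∂μ := by
          refine mul_le_mul_of_nonneg_left ?_ (by positivity)
          rw [hre]; exact hkey
  refine ⟨part1, ?_⟩
  rintro ⟨hyp1, hyp2⟩
  -- nonnegativity of l2norms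
  have hl2nn : ∀ (φ : Ω → H), 0 ≤ l2norm m μ φ := fun φ => Real.sqrt_nonneg _
  -- A and B sequences
  set A : ℕ → ℝ := fun j => ‖G (-(j : ℤ))‖ with hAdef
  set B : ℕ → ℝ := fun j => ‖f - G (j : ℤ)‖ with hBdef
  have hA0 : ∀ k, 0 ≤ A k := fun k => norm_nonneg _
  have hB0 : ∀ k, 0 ≤ B k := fun k => norm_nonneg _
  have hAanti : ∀ i j : ℕ, i ≤ j → A j ≤ A i := fun i j hij =>
    hGmono _ _ (by omega)
  have hBanti : ∀ i j : ℕ, i ≤ j → B j ≤ B i := by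
    intro i j hij
    have h1 := hresid (i : ℤ)
    have h2 := hresid (j : ℤ)
    have h3 := hGmono (i : ℤ) (j : ℤ) (by omega)
    have h4 : ‖f - G (j:ℤ)‖ ^ 2 ≤ ‖f - G (i:ℤ)‖ ^ 2 := by nlinarith [norm_nonneg (G (i:ℤ))]
    have := norm_nonneg (f - G (i:ℤ)); have := norm_nonneg (f - G (j:ℤ))
    nlinarith
  -- summability hypotheses in terms of A and B
  have hyp1' : Summable fun k : ℕ => A (k + 1) / Real.sqrt (k + 1) := by
    refine hyp1.congr fun k => ?_
    congr 1
    rw [hl2 (G (-(k : ℤ) - 1)) _ (hGcond _).symm]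
    have hcst : -(((k + 1 : ℕ)) : ℤ) = -(k : ℤ) - 1 := by push_cast; ring
    have hAk : A (k + 1) = ‖G (-(k : ℤ) - 1)‖ := by
      show ‖G (-((k + 1 : ℕ) : ℤ))‖ = _
      rw [hcst]
    exact hAk.symm
  have hyp2' : Summable fun k : ℕ => B (k + 1) / Real.sqrt (k + 1) := by
    refine hyp2.congr fun k => ?_
    congr 1
    refine (hresid_eq k).trans ?_
    have hcst : (((k + 1 : ℕ)) : ℤ) = (k : ℤ) + 1 := by push_cast; ring
    have hBk : B (k + 1) = ‖f - G ((k : ℤ) + 1)‖ := by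
      show ‖f - G (((k + 1 : ℕ)) : ℤ)‖ = _
      rw [hcst]
    exact hBk.symm
  have hsumA : Summable fun n : ℕ => Real.sqrt (2 ^ n) * A (2 ^ n) :=
    cond_sum8 hA0 hAanti hyp1'
  have hsumB : Summable fun n : ℕ => Real.sqrt (2 ^ n) * B (2 ^ n) :=
    cond_sum8 hB0 hBanti hyp2'
  -- negative side
  have hIccIco : ∀ n : ℕ, (Finset.Icc (2 ^ n) (2 ^ (n + 1) - 1) : Finset ℕ)
      = Finset.Ico (2 ^ n) (2 ^ (n + 1)) := by
    intro n
    ext x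
    simp only [Finset.mem_Icc, Finset.mem_Ico]
    have : (1:ℕ) ≤ 2 ^ (n+1) := Nat.one_le_two_pow
    omega
  have hnegsum : Summable fun k : ℕ => l2norm m μ (Pproj m μ F (-(k : ℤ)) X) := by
    refine summable_of_blocks8 (fun k => hl2nn _) (t := fun n => Real.sqrt (2 ^ n) * A (2 ^ n))
      ?_ hsumA (fun n => mul_nonneg (Real.sqrt_nonneg _) (hA0 _))
    intro n
    rw [← hIccIco]
    have h1' : (1 : ℕ) ≤ 2 ^ (n + 1) := Nat.one_le_two_pow
    have hip : ((2 ^ n : ℕ) : ℤ) = (2 : ℤ) ^ n := by push_cast; ring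
    have hip' : ((2 ^ (n + 1) - 1 : ℕ) : ℤ) = (2 : ℤ) ^ (n + 1) - 1 := by
      have h := hip
      have : ((2 ^ (n + 1) : ℕ) : ℤ) = (2 : ℤ) ^ (n + 1) := by push_cast; ring
      omega
    have hcast : ∑ k ∈ (Finset.Icc (2 ^ n) (2 ^ (n + 1) - 1) : Finset ℕ),
        l2norm m μ (Pproj m μ F (-(k : ℤ)) X)
          = ∑ k ∈ Finset.Icc ((2 : ℤ) ^ n) (2 ^ (n + 1) - 1),
              l2norm m μ (Pproj m μ F (-k) X) := by
      rw [sum_cast_Icc8 (fun j => l2norm m μ (Pproj m μ F (-j) X)) (2 ^ n) (2 ^ (n + 1) - 1),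
        hip, hip']
    rw [hcast]
    have hp1 := part1 n
    rw [hGint] at hp1
    have hb : ‖G (-((2 ^ n : ℕ) : ℤ))‖ = A (2 ^ n) := rfl
    rw [hb] at hp1
    have hS0 : 0 ≤ ∑ k ∈ Finset.Icc ((2 : ℤ) ^ n) (2 ^ (n + 1) - 1),
        l2norm m μ (Pproj m μ F (-k) X) :=
      Finset.sum_nonneg fun k _ => hl2nn _
    have ht0 : 0 ≤ Real.sqrt (2 ^ n) * A (2 ^ n) :=
      mul_nonneg (Real.sqrt_nonneg _) (hA0 _)
    have hsq : (Real.sqrt (2 ^ n) * A (2 ^ n)) ^ 2 = 2 ^ n * A (2 ^ n) ^ 2 := by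
      rw [mul_pow, Real.sq_sqrt (by positivity : (0:ℝ) ≤ (2:ℝ) ^ n)]
    have h2 := Real.sqrt_le_sqrt (hp1.trans_eq hsq.symm)
    rwa [Real.sqrt_sq hS0, Real.sqrt_sq ht0] at h2
  -- positive side
  have hposblock : ∀ n : ℕ,
      (∑ k ∈ (Finset.Icc (2 ^ n) (2 ^ (n + 1) - 1) : Finset ℕ),
          l2norm m μ (Pproj m μ F (k : ℤ) X)) ^ 2 ≤
        2 ^ n * B (2 ^ n - 1) ^ 2 := by
    intro n
    have h1 : (1 : ℕ) ≤ 2 ^ n := Nat.one_le_two_pow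
    have h1' : (1 : ℕ) ≤ 2 ^ (n + 1) := Nat.one_le_two_pow
    have hcard : (Finset.Icc (2 ^ n) (2 ^ (n + 1) - 1) : Finset ℕ).card = 2 ^ n := by
      rw [Nat.card_Icc]
      have : 2 ^ (n + 1) = 2 * 2 ^ n := by ring
      omega
    have hCS := sq_sum_le_card_mul_sum_sq
      (s := (Finset.Icc (2 ^ n) (2 ^ (n + 1) - 1) : Finset ℕ))
      (f := fun k : ℕ => l2norm m μ (Pproj m μ F (k : ℤ) X))
    rw [hcard] at hCS
    have hsq : ∑ k ∈ (Finset.Icc (2 ^ n) (2 ^ (n + 1) - 1) : Finset ℕ),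
        l2norm m μ (Pproj m μ F (k : ℤ) X) ^ 2 ≤ B (2 ^ n - 1) ^ 2 := by
      have hre : ∑ k ∈ (Finset.Icc (2 ^ n) (2 ^ (n + 1) - 1) : Finset ℕ),
          l2norm m μ (Pproj m μ F (k : ℤ) X) ^ 2
            = ∑ j ∈ Finset.Icc ((2 ^ n : ℕ) : ℤ) (((2 ^ (n + 1) - 1 : ℕ)) : ℤ),
                ‖G j - G (j - 1)‖ ^ 2 := by
        rw [← sum_cast_Icc8 (fun j => ‖G j - G (j - 1)‖ ^ 2) (2 ^ n) (2 ^ (n + 1) - 1)]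
        refine Finset.sum_congr rfl fun k _ => ?_
        rw [hu]
      have hc1 : ((2 ^ n : ℕ) : ℤ) = ((2 ^ n - 1 : ℕ) : ℤ) + 1 := by
        push_cast [h1]; ring
      have hab : ((2 ^ n - 1 : ℕ) : ℤ) ≤ ((2 ^ (n + 1) - 1 : ℕ) : ℤ) := by
        have : 2 ^ n - 1 ≤ 2 ^ (n+1) - 1 := by
          have : 2 ^ n ≤ 2 ^ (n+1) := Nat.pow_le_pow_right two_pos n.le_succ
          omega
        exact_mod_cast this
      rw [hre, hc1, hsumsq _ _ hab]
      have hr1 := hresid ((2 ^ n - 1 : ℕ) : ℤ)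
      have hlef := hGlef (((2 ^ (n + 1) - 1 : ℕ)) : ℤ)
      have hBb : B (2 ^ n - 1) = ‖f - G ((2 ^ n - 1 : ℕ) : ℤ)‖ := rfl
      rw [hBb]
      nlinarith [norm_nonneg (G (((2 ^ (n + 1) - 1 : ℕ)) : ℤ)), norm_nonneg f,
        hGmono (((2 ^ (n + 1) - 1 : ℕ)) : ℤ) (((2 ^ (n + 1) - 1 : ℕ)) : ℤ) le_rfl]
    calc (∑ k ∈ (Finset.Icc (2 ^ n) (2 ^ (n + 1) - 1) : Finset ℕ),
            l2norm m μ (Pproj m μ F (k : ℤ) X)) ^ 2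
        ≤ ((2 ^ n : ℕ) : ℝ) * ∑ k ∈ (Finset.Icc (2 ^ n) (2 ^ (n + 1) - 1) : Finset ℕ),
            l2norm m μ (Pproj m μ F (k : ℤ) X) ^ 2 := hCS
      _ = (2:ℝ) ^ n * ∑ k ∈ (Finset.Icc (2 ^ n) (2 ^ (n + 1) - 1) : Finset ℕ),
            l2norm m μ (Pproj m μ F (k : ℤ) X) ^ 2 := by
          rw [show ((2 ^ n : ℕ) : ℝ) = (2:ℝ) ^ n from by push_cast; ring]
      _ ≤ 2 ^ n * B (2 ^ n - 1) ^ 2 :=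
          mul_le_mul_of_nonneg_left hsq (by positivity)
  have hsumB' : Summable fun n : ℕ => Real.sqrt (2 ^ n) * B (2 ^ n - 1) := by
    have hstep : ∀ n : ℕ, Real.sqrt (2 ^ (n + 1)) * B (2 ^ (n + 1) - 1)
        ≤ Real.sqrt 2 * (Real.sqrt (2 ^ n) * B (2 ^ n)) := by
      intro n
      have h2 : Real.sqrt (2 ^ (n + 1)) = Real.sqrt 2 * Real.sqrt (2 ^ n) := by
        rw [← Real.sqrt_mul (by norm_num : (0:ℝ) ≤ 2)]
        norm_num [pow_succ]
        ring_nf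
      have hBle : B (2 ^ (n + 1) - 1) ≤ B (2 ^ n) := by
        refine hBanti _ _ ?_
        have : 2 ^ n + 1 ≤ 2 ^ (n+1) := by
          have : 2 ^ (n+1) = 2 * 2 ^ n := by ring
          have h1 : (1:ℕ) ≤ 2 ^ n := Nat.one_le_two_pow
          omega
        omega
      rw [h2]
      have hmul : Real.sqrt 2 * Real.sqrt (2 ^ n) * B (2 ^ (n + 1) - 1)
          ≤ Real.sqrt 2 * Real.sqrt (2 ^ n) * B (2 ^ n) :=
        mul_le_mul_of_nonneg_left hBle
          (mul_nonneg (Real.sqrt_nonneg 2) (Real.sqrt_nonneg _))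
      calc Real.sqrt 2 * Real.sqrt (2 ^ n) * B (2 ^ (n + 1) - 1)
          ≤ Real.sqrt 2 * Real.sqrt (2 ^ n) * B (2 ^ n) := hmul
        _ = Real.sqrt 2 * (Real.sqrt (2 ^ n) * B (2 ^ n)) := by ring
    have hsh : Summable fun n : ℕ => Real.sqrt (2 ^ (n + 1)) * B (2 ^ (n + 1) - 1) := by
      refine Summable.of_nonneg_of_le
        (fun n => mul_nonneg (Real.sqrt_nonneg _) (hB0 _)) hstep
        (hsumB.mul_left (Real.sqrt 2))
    exact (summable_nat_add_iff 1).1 hsh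
  have hpossum : Summable fun k : ℕ => l2norm m μ (Pproj m μ F (k : ℤ) X) := by
    refine summable_of_blocks8 (fun k => hl2nn _)
      (t := fun n => Real.sqrt (2 ^ n) * B (2 ^ n - 1)) ?_ hsumB'
      (fun n => mul_nonneg (Real.sqrt_nonneg _) (hB0 _))
    intro n
    rw [← hIccIco]
    have hp1 := hposblock n
    have hS0 : 0 ≤ ∑ k ∈ (Finset.Icc (2 ^ n) (2 ^ (n + 1) - 1) : Finset ℕ),
        l2norm m μ (Pproj m μ F (k : ℤ) X) :=
      Finset.sum_nonneg fun k _ => hl2nn _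
    have ht0 : 0 ≤ Real.sqrt (2 ^ n) * B (2 ^ n - 1) :=
      mul_nonneg (Real.sqrt_nonneg _) (hB0 _)
    have hsq : (Real.sqrt (2 ^ n) * B (2 ^ n - 1)) ^ 2 = 2 ^ n * B (2 ^ n - 1) ^ 2 := by
      rw [mul_pow, Real.sq_sqrt (by positivity : (0:ℝ) ≤ (2:ℝ) ^ n)]
    have h2 := Real.sqrt_le_sqrt (hp1.trans_eq hsq.symm)
    rwa [Real.sqrt_sq hS0, Real.sqrt_sq ht0] at h2
  have hfin : Summable fun n : ℤ => l2norm m μ (Pproj m μ F n X) :=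
    Summable.of_nat_of_neg hpossum hnegsum
  exact hfin
end
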